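/- arXiv:0710.2396 — 2 statements merged into one kernel-verified Lean document; each statement's English description precedes it below -/
import Mathlib

section
/- Let μ, σ ∈ ℝ and suppose u ∈ U satisfies equation (1.1). If, as t ↘ 0, the restrictions u(t,·)|_{(0,1)} converge uniformly on every compact subset of (0,1) (to some function on (0,1)), then both limits lim_{t↘0} u(t,0) and lim_{t↘0} u(t,1) exist in ℝ; in particular u(t,·) converges in F as t ↘ 0. -/
open Set MeasureTheory Filter

/-- The sup norm `‖f‖_u = sup_{x ∈ [0,1]} |f(x)|`. -/
noncomputable def unorm (f : ℝ → ℝ) : ℝ := ⨆ x : Set.Icc (0:ℝ) 1, |f x|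

/-- Membership in the space `F`: bounded on `[0,1]` and continuous on `(0,1)`. -/
def MemF (f : ℝ → ℝ) : Prop :=
  (∃ C, ∀ x ∈ Set.Icc (0:ℝ) 1, |f x| ≤ C) ∧ ContinuousOn f (Set.Ioo 0 1)

/-- `u(t,·) → f` in `F` as `t ↘ 0`: uniform boundedness for `t ∈ (0,1]`, pointwise
convergence on `[0,1]`, and uniform convergence on compact subsets of `(0,1)`. -/
def ConvF (u : ℝ → ℝ → ℝ) (f : ℝ → ℝ) : Prop :=
  (∃ C, ∀ t ∈ Set.Ioc (0:ℝ) 1, ∀ x ∈ Set.Icc (0:ℝ) 1, |u t x| ≤ C) ∧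
  (∀ x ∈ Set.Icc (0:ℝ) 1,
    Filter.Tendsto (fun t => u t x) (nhdsWithin 0 (Set.Ioi 0)) (nhds (f x))) ∧
  (∀ K ⊆ Set.Ioo (0:ℝ) 1, IsCompact K →
    TendstoUniformlyOn (fun t x => u t x) f (nhdsWithin 0 (Set.Ioi 0)) K)

/-- time derivative `∂_t u`. -/
noncomputable def pt (u : ℝ → ℝ → ℝ) (t x : ℝ) : ℝ := deriv (fun s => u s x) t

/-- spatial derivative `∂_x u`, taken within `[0,1]` (one-sided at the boundary). -/
noncomputable def px (u : ℝ → ℝ → ℝ) (t x : ℝ) : ℝ :=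
  derivWithin (fun y => u t y) (Set.Icc 0 1) x

/-- second spatial derivative `∂_x² u`, taken within `[0,1]`. -/
noncomputable def pxx (u : ℝ → ℝ → ℝ) (t x : ℝ) : ℝ :=
  derivWithin (fun y => px u t y) (Set.Icc 0 1) x

/-- Membership in the space `U`: `C¹` in `t`, `C²` in `x` up to and including the spatial
boundary, bounded on `(0,1] × [0,1]`, with `∂_t u`, `∂_x u`, `∂_x² u` bounded on
`[T₁,T₂] × [0,1]` for all `0 < T₁ < T₂ < ∞`. -/
def MemU (u : ℝ → ℝ → ℝ) : Prop :=
  (∀ t ∈ Set.Ioi (0:ℝ), ∀ x ∈ Set.Icc (0:ℝ) 1,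
    DifferentiableAt ℝ (fun s => u s x) t ∧
    DifferentiableWithinAt ℝ (fun y => u t y) (Set.Icc 0 1) x ∧
    DifferentiableWithinAt ℝ (fun y => px u t y) (Set.Icc 0 1) x) ∧
  ContinuousOn (fun p : ℝ × ℝ => u p.1 p.2) (Set.Ioi 0 ×ˢ Set.Icc 0 1) ∧
  ContinuousOn (fun p : ℝ × ℝ => pt u p.1 p.2) (Set.Ioi 0 ×ˢ Set.Icc 0 1) ∧
  ContinuousOn (fun p : ℝ × ℝ => px u p.1 p.2) (Set.Ioi 0 ×ˢ Set.Icc 0 1) ∧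
  ContinuousOn (fun p : ℝ × ℝ => pxx u p.1 p.2) (Set.Ioi 0 ×ˢ Set.Icc 0 1) ∧
  (∃ C, ∀ t ∈ Set.Ioc (0:ℝ) 1, ∀ x ∈ Set.Icc (0:ℝ) 1, |u t x| ≤ C) ∧
  (∀ T₁ T₂ : ℝ, 0 < T₁ → T₁ < T₂ → ∃ C, ∀ t ∈ Set.Icc T₁ T₂, ∀ x ∈ Set.Icc (0:ℝ) 1,
    |pt u t x| ≤ C ∧ |px u t x| ≤ C ∧ |pxx u t x| ≤ C)

/-- `u` satisfies equation (1.1): `∂_t u = ½ ∂_x² u + μ ∂_x u` on `(0,∞) × (0,1)`, with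
`∂_t u(t,0) = -σ ∂_x u(t,0)` and `∂_t u(t,1) = σ ∂_x u(t,1)` for `t > 0`. -/
def SatEq (μ σ : ℝ) (u : ℝ → ℝ → ℝ) : Prop :=
  (∀ t ∈ Set.Ioi (0:ℝ), ∀ x ∈ Set.Ioo (0:ℝ) 1,
    pt u t x = (1/2) * pxx u t x + μ * px u t x) ∧
  (∀ t ∈ Set.Ioi (0:ℝ),
    pt u t 0 = -σ * px u t 0 ∧ pt u t 1 = σ * px u t 1)

lemma sliceCont {v : ℝ × ℝ → ℝ} (hv : ContinuousOn v (Set.Ioi 0 ×ˢ Set.Icc 0 1))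
    {t : ℝ} (ht : 0 < t) : ContinuousOn (fun x => v (t, x)) (Set.Icc (0:ℝ) 1) := by
  intro x hx
  exact (hv (t, x) ⟨ht, hx⟩).comp ((continuous_const.prodMk continuous_id).continuousWithinAt)
    (fun y hy => ⟨ht, hy⟩)

/-- Integration by parts / FTC identity. -/
lemma ibp (μ σ : ℝ) (u : ℝ → ℝ → ℝ) (hU : MemU u) (hEq : SatEq μ σ u) (a b : ℝ)
    {t : ℝ} (ht : 0 < t) :
    ∫ x in Set.Ioo (0:ℝ) 1, pt u t x * (a + b * x) =
      ((1/2) * (px u t 1 * (a + b)) - (1/2*b) * u t 1 + μ * (u t 1 * (a + b)))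
      - ((1/2) * (px u t 0 * a) - (1/2*b) * u t 0 + μ * (u t 0 * a))
      - μ * b * ∫ x in Set.Ioo (0:ℝ) 1, u t x := by
  obtain ⟨hdiff, hcu, hcpt, hcpx, hcpxx, _, _⟩ := hU
  have hcu' := sliceCont hcu ht
  have hcpx' := sliceCont hcpx ht
  have hcpxx' := sliceCont hcpxx ht
  set P : ℝ → ℝ := fun x => (1/2) * (px u t x * (a + b*x)) - (1/2*b) * u t x
      + μ * (u t x * (a + b*x)) with hPdef
  set q : ℝ → ℝ := fun x => (1/2) * (pxx u t x * (a + b*x)) + μ * (px u t x * (a + b*x))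
      + μ * b * u t x with hqdef
  have hgc : ContinuousOn (fun x : ℝ => a + b * x) (Set.Icc (0:ℝ) 1) :=
    (continuous_const.add (continuous_const.mul continuous_id)).continuousOn
  have hPc : ContinuousOn P (Set.Icc (0:ℝ) 1) := by
    apply ContinuousOn.add
    · exact ((continuousOn_const.mul (hcpx'.mul hgc))).sub (continuousOn_const.mul hcu')
    · exact continuousOn_const.mul (hcu'.mul hgc)
  have hqc : ContinuousOn q (Set.Icc (0:ℝ) 1) := by
    apply ContinuousOn.add
    · exact (continuousOn_const.mul (hcpxx'.mul hgc)).add (continuousOn_const.mul (hcpx'.mul hgc))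
    · exact continuousOn_const.mul hcu'
  have hder : ∀ x ∈ Set.Ioo (0:ℝ) 1, HasDerivAt P (q x) x := by
    intro x hx
    have hxI : x ∈ Set.Icc (0:ℝ) 1 := Set.mem_Icc_of_Ioo hx
    have hnhds : Set.Icc (0:ℝ) 1 ∈ nhds x := Icc_mem_nhds hx.1 hx.2
    obtain ⟨_, hu2, hu3⟩ := hdiff t ht x hxI
    have hu : HasDerivAt (fun y => u t y) (px u t x) x :=
      (hu2.hasDerivWithinAt).hasDerivAt hnhds
    have hpx : HasDerivAt (fun y => px u t y) (pxx u t x) x :=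
      (hu3.hasDerivWithinAt).hasDerivAt hnhds
    have hg : HasDerivAt (fun y : ℝ => a + b * y) b x := by
      simpa using ((hasDerivAt_id x).const_mul b).const_add a
    have h2 := ((hpx.mul hg).const_mul (1/2:ℝ))
    have h3 := hu.const_mul (1/2*b : ℝ)
    have h4 := (hu.mul hg).const_mul μ
    have := (h2.sub h3).add h4
    refine this.congr_deriv ?_
    simp only [hqdef]
    ring
  have hqint : IntervalIntegrable q volume 0 1 := by
    apply ContinuousOn.intervalIntegrable
    rwa [Set.uIcc_of_le (by norm_num : (0:ℝ) ≤ 1)]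
  have hftc : ∫ x in (0:ℝ)..1, q x = P 1 - P 0 :=
    intervalIntegral.integral_eq_sub_of_hasDeriv_right_of_le (by norm_num) hPc
      (fun x hx => (hder x hx).hasDerivWithinAt) hqint
  have hioo : ∫ x in Set.Ioo (0:ℝ) 1, q x = P 1 - P 0 := by
    rw [← MeasureTheory.integral_Ioc_eq_integral_Ioo, ← intervalIntegral.integral_of_le
      (by norm_num : (0:ℝ) ≤ 1)]
    exact hftc
  have hqeq : Set.EqOn q (fun x => pt u t x * (a + b*x) + μ * b * u t x) (Set.Ioo (0:ℝ) 1) := by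
    intro x hx
    have := hEq.1 t ht x hx
    simp only [hqdef]
    rw [this]; ring
  have hint1 : MeasureTheory.IntegrableOn (fun x => pt u t x * (a + b*x))
      (Set.Ioo (0:ℝ) 1) volume := by
    apply MeasureTheory.IntegrableOn.mono_set _ Set.Ioo_subset_Icc_self
    exact (((sliceCont hcpt ht).mul hgc)).integrableOn_Icc
  have hint2 : MeasureTheory.IntegrableOn (fun x => u t x) (Set.Ioo (0:ℝ) 1) volume := by
    apply MeasureTheory.IntegrableOn.mono_set _ Set.Ioo_subset_Icc_self
    exact hcu'.integrableOn_Icc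
  have hsplit : ∫ x in Set.Ioo (0:ℝ) 1, q x
      = (∫ x in Set.Ioo (0:ℝ) 1, pt u t x * (a + b*x))
        + μ * b * ∫ x in Set.Ioo (0:ℝ) 1, u t x := by
    rw [MeasureTheory.setIntegral_congr_fun measurableSet_Ioo hqeq]
    rw [MeasureTheory.integral_add hint1 (hint2.const_mul (μ*b))]
    rw [MeasureTheory.integral_const_mul]
  have : (∫ x in Set.Ioo (0:ℝ) 1, pt u t x * (a + b*x))
      = P 1 - P 0 - μ * b * ∫ x in Set.Ioo (0:ℝ) 1, u t x := by
    rw [← hioo, hsplit]; ring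
  rw [this]
  simp only [hPdef]
  norm_num

/-- Differentiation under the integral sign. -/
lemma dint (u : ℝ → ℝ → ℝ) (hU : MemU u) (a b : ℝ) {t : ℝ} (ht : 0 < t) :
    HasDerivAt (fun s => ∫ x in Set.Ioo (0:ℝ) 1, u s x * (a + b * x))
      (∫ x in Set.Ioo (0:ℝ) 1, pt u t x * (a + b * x)) t := by
  obtain ⟨hdiff, hcu, hcpt, hcpx, hcpxx, hbd, hder⟩ := hU
  obtain ⟨C, hC⟩ := hder (t/2) (2*t) (by linarith) (by linarith)
  have hball : Metric.ball t (t/2) ⊆ Set.Icc (t/2) (2*t) := by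
    intro s hs
    rw [Metric.mem_ball, Real.dist_eq, abs_lt] at hs
    constructor <;> linarith [hs.1, hs.2]
  have hballpos : ∀ s ∈ Metric.ball t (t/2), (0:ℝ) < s := by
    intro s hs
    rw [Metric.mem_ball, Real.dist_eq, abs_lt] at hs
    linarith [hs.1]
  have hmeas : ∀ s : ℝ, 0 < s → AEStronglyMeasurable (fun x => u s x * (a + b * x))
      (volume.restrict (Set.Ioo (0:ℝ) 1)) := by
    intro s hs
    apply ContinuousOn.aestronglyMeasurable _ measurableSet_Ioo
    exact ((sliceCont hcu hs).mono Set.Ioo_subset_Icc_self).mul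
      (continuous_const.add (continuous_const.mul continuous_id)).continuousOn
  have key := hasDerivAt_integral_of_dominated_loc_of_deriv_le
    (F := fun s x => u s x * (a + b * x)) (F' := fun s x => pt u s x * (a + b * x))
    (μ := volume.restrict (Set.Ioo (0:ℝ) 1)) (x₀ := t)
    (bound := fun _ => C * (|a| + |b|))
    (Metric.ball_mem_nhds t (half_pos ht))
    (by
      filter_upwards [eventually_gt_nhds ht] with s hs
      exact hmeas s hs)
    (by
      apply MeasureTheory.IntegrableOn.mono_set _ Set.Ioo_subset_Icc_self
      exact ((sliceCont hcu ht).mul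
        (continuous_const.add (continuous_const.mul continuous_id)).continuousOn).integrableOn_Icc)
    (by
      apply ContinuousOn.aestronglyMeasurable _ measurableSet_Ioo
      exact ((sliceCont hcpt ht).mono Set.Ioo_subset_Icc_self).mul
        (continuous_const.add (continuous_const.mul continuous_id)).continuousOn)
    (by
      rw [MeasureTheory.ae_restrict_iff' measurableSet_Ioo]
      apply MeasureTheory.ae_of_all
      intro x hx s hs
      have h1 := (hC s (hball hs) x (Set.mem_Icc_of_Ioo hx)).1
      have h2 : |a + b * x| ≤ |a| + |b| := by
        have hx0 : (0:ℝ) ≤ x := le_of_lt hx.1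
        have hx1 : x ≤ 1 := le_of_lt hx.2
        calc |a + b * x| ≤ |a| + |b * x| := abs_add_le _ _
          _ = |a| + |b| * |x| := by rw [abs_mul]
          _ ≤ |a| + |b| * 1 := by
              have : |x| ≤ 1 := abs_le.mpr ⟨by linarith, hx1⟩
              nlinarith [abs_nonneg b]
          _ = |a| + |b| := by ring
      calc ‖pt u s x * (a + b * x)‖ = |pt u s x| * |a + b * x| := abs_mul _ _
        _ ≤ C * (|a| + |b|) := by
            apply mul_le_mul h1 h2 (abs_nonneg _)
            exact le_trans (abs_nonneg _) h1)
    (MeasureTheory.integrable_const _)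
    (by
      rw [MeasureTheory.ae_restrict_iff' measurableSet_Ioo]
      apply MeasureTheory.ae_of_all
      intro x hx s hs
      have := (hdiff s (hballpos s hs) x (Set.mem_Icc_of_Ioo hx)).1
      exact this.hasDerivAt.mul_const _)
  exact key.2

lemma seq_tendsto : Filter.Tendsto (fun n : ℕ => (1:ℝ)/(n+1)) Filter.atTop
    (nhdsWithin 0 (Set.Ioi 0)) := by
  apply tendsto_nhdsWithin_of_tendsto_nhds_of_eventually_within
  · exact tendsto_one_div_add_atTop_nhds_zero_nat
  · exact Filter.Eventually.of_forall (fun n => Set.mem_Ioi.mpr (by positivity))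

/-- Dominated convergence for the weighted integrals. -/
lemma domconv (u : ℝ → ℝ → ℝ) (hU : MemU u) (φ : ℝ → ℝ)
    (hconv : ∀ K ⊆ Set.Ioo (0:ℝ) 1, IsCompact K →
      TendstoUniformlyOn (fun t x => u t x) φ (nhdsWithin 0 (Set.Ioi 0)) K)
    (a b : ℝ) :
    Filter.Tendsto (fun t => ∫ x in Set.Ioo (0:ℝ) 1, u t x * (a + b * x))
      (nhdsWithin 0 (Set.Ioi 0)) (nhds (∫ x in Set.Ioo (0:ℝ) 1, φ x * (a + b * x))) := by
  obtain ⟨hdiff, hcu, hcpt, hcpx, hcpxx, ⟨C, hC⟩, hder⟩ := hU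
  have hgc : Continuous (fun x : ℝ => a + b * x) :=
    continuous_const.add (continuous_const.mul continuous_id)
  have hmeas : ∀ s : ℝ, 0 < s → AEStronglyMeasurable (fun x => u s x * (a + b * x))
      (volume.restrict (Set.Ioo (0:ℝ) 1)) := by
    intro s hs
    apply ContinuousOn.aestronglyMeasurable _ measurableSet_Ioo
    exact ((sliceCont hcu hs).mono Set.Ioo_subset_Icc_self).mul hgc.continuousOn
  have hpt : ∀ x ∈ Set.Ioo (0:ℝ) 1, Filter.Tendsto (fun t => u t x)
      (nhdsWithin 0 (Set.Ioi 0)) (nhds (φ x)) := by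
    intro x hx
    exact (hconv {x} (Set.singleton_subset_iff.mpr hx) isCompact_singleton).tendsto_at rfl
  apply MeasureTheory.tendsto_integral_filter_of_dominated_convergence
    (fun _ => C * (|a| + |b|))
  · filter_upwards [self_mem_nhdsWithin] with t ht
    exact hmeas t ht
  · have hIoc : Set.Ioc (0:ℝ) 1 ∈ nhdsWithin (0:ℝ) (Set.Ioi 0) := by
      apply mem_nhdsWithin.mpr
      exact ⟨Set.Iio 1, isOpen_Iio, by norm_num, fun y hy => ⟨hy.2, le_of_lt hy.1⟩⟩
    filter_upwards [hIoc] with t ht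
    rw [MeasureTheory.ae_restrict_iff' measurableSet_Ioo]
    apply MeasureTheory.ae_of_all
    intro x hx
    have h1 := hC t ht x (Set.mem_Icc_of_Ioo hx)
    have h2 : |a + b * x| ≤ |a| + |b| := by
      calc |a + b * x| ≤ |a| + |b * x| := abs_add_le _ _
        _ = |a| + |b| * |x| := by rw [abs_mul]
        _ ≤ |a| + |b| := by
            have : |x| ≤ 1 := abs_le.mpr ⟨by linarith [hx.1], le_of_lt hx.2⟩
            nlinarith [abs_nonneg b]
    calc ‖u t x * (a + b * x)‖ = |u t x| * |a + b * x| := abs_mul _ _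
      _ ≤ C * (|a| + |b|) :=
          mul_le_mul h1 h2 (abs_nonneg _) (le_trans (abs_nonneg _) h1)
  · exact MeasureTheory.integrable_const _
  · rw [MeasureTheory.ae_restrict_iff' measurableSet_Ioo]
    apply MeasureTheory.ae_of_all
    intro x hx
    exact (hpt x hx).mul_const _

lemma limit_of_lipschitz (G : ℝ → ℝ) (L : ℝ)
    (h : ∀ s ∈ Set.Ioc (0:ℝ) 1, ∀ t ∈ Set.Ioc (0:ℝ) 1, |G s - G t| ≤ L * |s - t|) :
    ∃ l, Filter.Tendsto G (nhdsWithin 0 (Set.Ioi 0)) (nhds l) := by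
  have hL : 0 ≤ L := by
    have h1 := h 1 (by norm_num) (1/2) (by norm_num)
    have h0 : (0:ℝ) ≤ |G 1 - G (1/2)| := abs_nonneg _
    rw [show |(1:ℝ) - 1/2| = 1/2 by norm_num] at h1
    linarith
  have hmem : ∀ n : ℕ, (1:ℝ)/(n+1) ∈ Set.Ioc (0:ℝ) 1 := by
    intro n
    refine ⟨by positivity, ?_⟩
    rw [div_le_one (by positivity)]
    linarith [Nat.cast_nonneg (α := ℝ) n]
  have htend : Filter.Tendsto (fun n : ℕ => (1:ℝ)/(n+1)) Filter.atTop (nhds 0) :=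
    tendsto_one_div_add_atTop_nhds_zero_nat
  have hcauchy : CauchySeq (fun n : ℕ => G (1/(n+1))) := by
    refine cauchySeq_of_le_tendsto_0 (fun n => L * (2/((n:ℝ)+1))) ?_ ?_
    · intro n m N hn hm
      have h1 := h _ (hmem n) _ (hmem m)
      have h2 : |1/((n:ℝ)+1) - 1/((m:ℝ)+1)| ≤ 2/((N:ℝ)+1) := by
        have hNn : ((N:ℝ)+1) ≤ (n:ℝ)+1 := by
          have := (Nat.cast_le (α := ℝ)).mpr hn; linarith
        have hNm : ((N:ℝ)+1) ≤ (m:ℝ)+1 := by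
          have := (Nat.cast_le (α := ℝ)).mpr hm; linarith
        have hn' : (1:ℝ)/((n:ℝ)+1) ≤ 1/((N:ℝ)+1) :=
          one_div_le_one_div_of_le (by positivity) hNn
        have hm' : (1:ℝ)/((m:ℝ)+1) ≤ 1/((N:ℝ)+1) :=
          one_div_le_one_div_of_le (by positivity) hNm
        have hpn : (0:ℝ) < 1/((n:ℝ)+1) := by positivity
        have hpm : (0:ℝ) < 1/((m:ℝ)+1) := by positivity
        rw [abs_sub_le_iff]
        constructor <;> [skip; skip] <;>
          · rw [show (2:ℝ)/((N:ℝ)+1) = 1/((N:ℝ)+1) + 1/((N:ℝ)+1) by ring]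
            linarith
      calc dist (G (1/((n:ℝ)+1))) (G (1/((m:ℝ)+1))) = |G (1/((n:ℝ)+1)) - G (1/((m:ℝ)+1))| :=
            Real.dist_eq _ _
        _ ≤ L * |1/((n:ℝ)+1) - 1/((m:ℝ)+1)| := h1
        _ ≤ L * (2/((N:ℝ)+1)) := mul_le_mul_of_nonneg_left h2 hL
    · have : Filter.Tendsto (fun n : ℕ => 2/((n:ℝ)+1)) Filter.atTop (nhds 0) := by
        simpa [div_eq_mul_inv] using htend.const_mul (2:ℝ)
      simpa using this.const_mul L
  obtain ⟨l, hl⟩ := cauchySeq_tendsto_of_complete hcauchy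
  refine ⟨l, ?_⟩
  have key : ∀ t ∈ Set.Ioc (0:ℝ) 1, |G t - l| ≤ L * t := by
    intro t ht
    have h1 : Filter.Tendsto (fun n : ℕ => |G t - G (1/(n+1))|) Filter.atTop
        (nhds |G t - l|) := (tendsto_const_nhds.sub hl).abs
    have h2 : Filter.Tendsto (fun n : ℕ => L * |t - 1/((n:ℝ)+1)|) Filter.atTop
        (nhds (L * |t - 0|)) := ((tendsto_const_nhds.sub htend).abs).const_mul L
    rw [sub_zero] at h2
    have h3 : ∀ n : ℕ, |G t - G (1/(n+1))| ≤ L * |t - 1/((n:ℝ)+1)| :=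
      fun n => h _ ht _ (hmem n)
    have := le_of_tendsto_of_tendsto' h1 h2 h3
    calc |G t - l| ≤ L * |t| := this
      _ = L * t := by rw [abs_of_pos ht.1]
  rw [Metric.tendsto_nhds]
  intro ε hε
  filter_upwards [Ioc_mem_nhdsGT (by norm_num : (0:ℝ) < 1),
    eventually_nhdsWithin_of_eventually_nhds (eventually_lt_nhds
      (show (0:ℝ) < ε / (L+1) by positivity))] with t ht ht2
  have h1 := key t ht
  have : L * t < ε := by
    have hLt : L * t ≤ L * (ε/(L+1)) := by
      apply mul_le_mul_of_nonneg_left (le_of_lt ht2) hL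
    have : L * (ε/(L+1)) < ε := by
      rw [div_eq_inv_mul, ← mul_assoc]
      have hL1 : 0 < L + 1 := by linarith
      rw [show L * (L+1)⁻¹ * ε = (L/(L+1)) * ε by ring]
      have : L/(L+1) < 1 := by rw [div_lt_one hL1]; linarith
      nlinarith
    linarith
  rw [Real.dist_eq]
  linarith [key t ht]

/-- The key boundary-combination convergence lemma. -/
lemma combo (μ σ : ℝ) (u : ℝ → ℝ → ℝ) (hU : MemU u) (hEq : SatEq μ σ u) (φ : ℝ → ℝ)
    (hconv : ∀ K ⊆ Set.Ioo (0:ℝ) 1, IsCompact K →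
      TendstoUniformlyOn (fun t x => u t x) φ (nhdsWithin 0 (Set.Ioi 0)) K)
    (a b : ℝ) :
    ∃ l, Filter.Tendsto (fun t => (a + b) * u t 1 + a * u t 0)
      (nhdsWithin 0 (Set.Ioi 0)) (nhds l) := by
  obtain ⟨C, hC⟩ := hU.2.2.2.2.2.1
  have hC0 : 0 ≤ C := le_trans (abs_nonneg _) (hC 1 (by norm_num) 0 (by norm_num))
  set I : ℝ → ℝ := fun t => ∫ x in Set.Ioo (0:ℝ) 1, u t x * (a + b * x) with hIdef
  set J : ℝ → ℝ := fun t => ∫ x in Set.Ioo (0:ℝ) 1, u t x with hJdef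
  set G : ℝ → ℝ := fun t => 2 * σ * I t - ((a + b) * u t 1 + a * u t 0) with hGdef
  set R : ℝ → ℝ := fun t => 2 * σ * (-(1/2*b) * u t 1 + μ * (u t 1 * (a+b))
      + (1/2*b) * u t 0 - μ * (u t 0 * a) - μ * b * J t) with hRdef
  -- derivative of G
  have hGder : ∀ t ∈ Set.Ioi (0:ℝ), HasDerivAt G (R t) t := by
    intro t ht
    rw [Set.mem_Ioi] at ht
    have h1 : HasDerivAt (fun s => u s 1) (pt u t 1) t :=
      (hU.1 t ht 1 (by norm_num)).1.hasDerivAt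
    have h0 : HasDerivAt (fun s => u s 0) (pt u t 0) t :=
      (hU.1 t ht 0 (by norm_num)).1.hasDerivAt
    have hI : HasDerivAt I (∫ x in Set.Ioo (0:ℝ) 1, pt u t x * (a + b * x)) t :=
      dint u hU a b ht
    have hG : HasDerivAt G
        (2 * σ * (∫ x in Set.Ioo (0:ℝ) 1, pt u t x * (a + b * x))
          - ((a + b) * pt u t 1 + a * pt u t 0)) t :=
      (hI.const_mul (2*σ)).sub ((h1.const_mul (a+b)).add (h0.const_mul a))
    convert hG using 1
    rw [ibp μ σ u hU hEq a b ht, (hEq.2 t ht).1, (hEq.2 t ht).2]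
    simp only [hRdef, hJdef]
    ring
  -- bound on R
  set L : ℝ := 2 * |σ| * ((1/2*|b|) * C + |μ| * (C * (|a|+|b|)) + (1/2*|b|) * C
      + |μ| * (C * |a|) + |μ| * |b| * C) with hLdef
  have hRbd : ∀ t ∈ Set.Ioc (0:ℝ) 1, |R t| ≤ L := by
    intro t ht
    have hu1 : |u t 1| ≤ C := hC t ht 1 (by norm_num)
    have hu0 : |u t 0| ≤ C := hC t ht 0 (by norm_num)
    have hJb : |J t| ≤ C := by
      have h := MeasureTheory.norm_setIntegral_le_of_norm_le_const
        (μ := volume) (s := Set.Ioo (0:ℝ) 1) (f := fun x => u t x) (C := C)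
        (by simp)
        (fun x hx => hC t ht x (Set.mem_Icc_of_Ioo hx))
      simpa using h
    have e1 : |(-(1/2*b)) * u t 1| ≤ (1/2*|b|) * C := by
      rw [abs_mul, abs_neg, show |(1/2*b : ℝ)| = 1/2*|b| from by rw [abs_mul]; norm_num]
      exact mul_le_mul_of_nonneg_left hu1 (by positivity)
    have e2 : |μ * (u t 1 * (a+b))| ≤ |μ| * (C * (|a|+|b|)) := by
      rw [abs_mul, abs_mul]
      exact mul_le_mul_of_nonneg_left
        (mul_le_mul hu1 (abs_add_le a b) (abs_nonneg _) hC0) (abs_nonneg μ)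
    have e3 : |(1/2*b) * u t 0| ≤ (1/2*|b|) * C := by
      rw [abs_mul, show |(1/2*b : ℝ)| = 1/2*|b| from by rw [abs_mul]; norm_num]
      exact mul_le_mul_of_nonneg_left hu0 (by positivity)
    have e4 : |μ * (u t 0 * a)| ≤ |μ| * (C * |a|) := by
      rw [abs_mul, abs_mul]
      exact mul_le_mul_of_nonneg_left
        (mul_le_mul_of_nonneg_right hu0 (abs_nonneg a)) (abs_nonneg μ)
    have e5 : |μ * b * J t| ≤ |μ| * |b| * C := by
      rw [abs_mul, abs_mul]
      exact mul_le_mul_of_nonneg_left hJb (by positivity)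
    obtain ⟨l1, r1⟩ := abs_le.mp e1
    obtain ⟨l2, r2⟩ := abs_le.mp e2
    obtain ⟨l3, r3⟩ := abs_le.mp e3
    obtain ⟨l4, r4⟩ := abs_le.mp e4
    obtain ⟨l5, r5⟩ := abs_le.mp e5
    have habs : |(-(1/2*b) * u t 1 + μ * (u t 1 * (a+b)) + (1/2*b) * u t 0
        - μ * (u t 0 * a) - μ * b * J t)|
        ≤ (1/2*|b|) * C + |μ| * (C * (|a|+|b|)) + (1/2*|b|) * C + |μ| * (C * |a|)
          + |μ| * |b| * C := by
      rw [abs_le]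
      constructor <;> linarith
    calc |R t| = |2 * σ| * |(-(1/2*b) * u t 1 + μ * (u t 1 * (a+b)) + (1/2*b) * u t 0
          - μ * (u t 0 * a) - μ * b * J t)| := by rw [hRdef, abs_mul]
      _ ≤ |2 * σ| * ((1/2*|b|) * C + |μ| * (C * (|a|+|b|)) + (1/2*|b|) * C + |μ| * (C * |a|)
          + |μ| * |b| * C) := mul_le_mul_of_nonneg_left habs (abs_nonneg _)
      _ = L := by rw [hLdef, abs_mul]; norm_num
  -- Lipschitz estimate
  have hGlip : ∀ s ∈ Set.Ioc (0:ℝ) 1, ∀ t ∈ Set.Ioc (0:ℝ) 1, |G s - G t| ≤ L * |s - t| := by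
    intro s hs t ht
    have h := Convex.norm_image_sub_le_of_norm_hasDerivWithin_le
      (f := G) (f' := R) (C := L) (s := Set.Ioc (0:ℝ) 1)
      (fun x hx => (hGder x hx.1).hasDerivWithinAt)
      (fun x hx => by rw [Real.norm_eq_abs]; exact hRbd x hx)
      (convex_Ioc 0 1) ht hs
    simpa [Real.norm_eq_abs] using h
  obtain ⟨lG, hlG⟩ := limit_of_lipschitz G L hGlip
  have hIlim := domconv u hU φ hconv a b
  refine ⟨2 * σ * (∫ x in Set.Ioo (0:ℝ) 1, φ x * (a + b * x)) - lG, ?_⟩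
  have h := (hIlim.const_mul (2*σ)).sub hlG
  have heq : (fun t => 2 * σ * I t - G t) = fun t => (a + b) * u t 1 + a * u t 0 := by
    funext t
    simp only [hGdef]
    ring
  rw [← heq]
  exact h
/-- Theorem 1.1(i): if `u ∈ U` satisfies (1.1) and `u(t,·)` converges uniformly
on compact subsets of `(0,1)` as `t ↘ 0`, then `u(t,0)` and `u(t,1)` converge as `t ↘ 0`,
and `u(t,·)` converges in `F`. -/
theorem stmt0 (μ σ : ℝ) (u : ℝ → ℝ → ℝ) (hU : MemU u) (hEq : SatEq μ σ u)
    (φ : ℝ → ℝ)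
    (hconv : ∀ K ⊆ Set.Ioo (0:ℝ) 1, IsCompact K →
      TendstoUniformlyOn (fun t x => u t x) φ (nhdsWithin 0 (Set.Ioi 0)) K) :
    (∃ l₀ : ℝ, Filter.Tendsto (fun t => u t 0) (nhdsWithin 0 (Set.Ioi 0)) (nhds l₀)) ∧
    (∃ l₁ : ℝ, Filter.Tendsto (fun t => u t 1) (nhdsWithin 0 (Set.Ioi 0)) (nhds l₁)) ∧
    (∃ f : ℝ → ℝ, MemF f ∧ ConvF u f) := by
  obtain ⟨l₀, hl₀⟩ := combo μ σ u hU hEq φ hconv 1 (-1)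
  obtain ⟨l₁, hl₁⟩ := combo μ σ u hU hEq φ hconv 0 1
  have hl0 : Filter.Tendsto (fun t => u t 0) (nhdsWithin 0 (Set.Ioi 0)) (nhds l₀) := by
    have heq : (fun t => ((1:ℝ) + -1) * u t 1 + 1 * u t 0) = fun t => u t 0 := by
      funext t; ring
    rwa [heq] at hl₀
  have hl1 : Filter.Tendsto (fun t => u t 1) (nhdsWithin 0 (Set.Ioi 0)) (nhds l₁) := by
    have heq : (fun t => ((0:ℝ) + 1) * u t 1 + 0 * u t 0) = fun t => u t 1 := by
      funext t; ring
    rwa [heq] at hl₁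
  refine ⟨⟨l₀, hl0⟩, ⟨l₁, hl1⟩, ?_⟩
  obtain ⟨C, hC⟩ := hU.2.2.2.2.2.1
  have hcu := hU.2.1
  have hIoc : Set.Ioc (0:ℝ) 1 ∈ nhdsWithin (0:ℝ) (Set.Ioi 0) :=
    mem_nhdsWithin.mpr ⟨Set.Iio 1, isOpen_Iio, by norm_num,
      fun y hy => ⟨hy.2, le_of_lt hy.1⟩⟩
  have hpt : ∀ x ∈ Set.Ioo (0:ℝ) 1, Filter.Tendsto (fun t => u t x)
      (nhdsWithin 0 (Set.Ioi 0)) (nhds (φ x)) := fun x hx =>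
    (hconv {x} (Set.singleton_subset_iff.mpr hx) isCompact_singleton).tendsto_at rfl
  have hφC : ∀ x ∈ Set.Ioo (0:ℝ) 1, |φ x| ≤ C := by
    intro x hx
    have hev : ∀ᶠ t in nhdsWithin (0:ℝ) (Set.Ioi 0), |u t x| ≤ C := by
      filter_upwards [hIoc] with t ht
      exact hC t ht x (Set.mem_Icc_of_Ioo hx)
    exact le_of_tendsto ((hpt x hx).abs) hev
  -- continuity of φ on (0,1)
  have hφcont : ContinuousOn φ (Set.Ioo (0:ℝ) 1) := by
    intro x hx
    have hx1 := hx.1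
    have hx2 := hx.2
    set δ : ℝ := min x (1 - x) / 2 with hδdef
    have hmin1 : min x (1-x) ≤ x := min_le_left _ _
    have hmin2 : min x (1-x) ≤ 1 - x := min_le_right _ _
    have hminpos : 0 < min x (1-x) := lt_min (by linarith) (by linarith)
    have hδpos : 0 < δ := by rw [hδdef]; positivity
    have hδ1 : δ ≤ x/2 := by rw [hδdef]; linarith
    have hδ2 : δ ≤ (1-x)/2 := by rw [hδdef]; linarith
    have hK : Set.Icc (x - δ) (x + δ) ⊆ Set.Ioo (0:ℝ) 1 := by
      intro y hy
      exact ⟨by linarith [hy.1], by linarith [hy.2]⟩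
    have hunif := hconv _ hK isCompact_Icc
    have hcont : ContinuousOn φ (Set.Icc (x - δ) (x + δ)) := by
      apply hunif.continuousOn
      apply Filter.Eventually.frequently
      filter_upwards [self_mem_nhdsWithin] with t ht
      exact (sliceCont hcu ht).mono (fun y hy => Set.mem_Icc_of_Ioo (hK hy))
    have hmem : Set.Icc (x - δ) (x + δ) ∈ nhds x :=
      Icc_mem_nhds (by linarith) (by linarith)
    exact (hcont.continuousAt hmem).continuousWithinAt
  set f : ℝ → ℝ := fun x => if x = 0 then l₀ else if x = 1 then l₁ else φ x with hfdef
  have hfIoo : Set.EqOn f φ (Set.Ioo (0:ℝ) 1) := by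
    intro x hx
    have h0 : x ≠ 0 := ne_of_gt hx.1
    have h1 : x ≠ 1 := ne_of_lt hx.2
    simp only [hfdef, if_neg h0, if_neg h1]
  refine ⟨f, ⟨⟨max C (max |l₀| |l₁|), ?_⟩, hφcont.congr hfIoo⟩, ⟨C, hC⟩, ?_, ?_⟩
  · intro x hx
    rcases eq_or_lt_of_le hx.1 with h0 | h0
    · simp only [hfdef, ← h0, if_pos rfl]
      exact le_trans (le_max_left _ _) (le_max_right _ _)
    rcases eq_or_lt_of_le hx.2 with h1 | h1
    · have hne : x ≠ 0 := ne_of_gt h0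
      simp only [hfdef, if_neg hne, if_pos h1]
      exact le_trans (le_max_right _ _) (le_max_right _ _)
    · rw [hfIoo ⟨h0, h1⟩]
      exact le_trans (hφC x ⟨h0, h1⟩) (le_max_left _ _)
  · intro x hx
    rcases eq_or_lt_of_le hx.1 with h0 | h0
    · have : f x = l₀ := by simp only [hfdef, ← h0, if_pos rfl]
      rw [this, ← h0]
      exact hl0
    rcases eq_or_lt_of_le hx.2 with h1 | h1
    · have : f x = l₁ := by simp only [hfdef, if_neg (ne_of_gt h0), if_pos h1]
      rw [this, h1]
      exact hl1
    · rw [hfIoo ⟨h0, h1⟩]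
      exact hpt x ⟨h0, h1⟩
  · intro K hK hcK
    exact (hconv K hK hcK).congr_right (fun x hx => (hfIoo (hK hx)).symm)
end

section
/- Let σ > 0 and μ ∈ ℝ, and let J be any C² solution of equation (R). Let f ∈ F and let u ∈ U satisfy equation (1.1) with u(t,·) → f in F as t ↘ 0. Then for every t > 0, D^J(u(t,·)) = exp(−t B(J)) · D^J f, where exp denotes the 2×2 matrix exponential. In particular, D^J f = 0 implies D^J(u(t,·)) = 0 for all t > 0. -/
open Set MeasureTheory Filter

/-- derivative within `[0,1]` (one-sided at the boundary). -/
noncomputable def dxI (f : ℝ → ℝ) (x : ℝ) : ℝ := derivWithin f (Set.Icc 0 1) x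

/-- The matrix `B(J)` associated to `J = (J₀, J₁)`. -/
noncomputable def BJ (μ σ : ℝ) (J₀ J₁ : ℝ → ℝ) : Matrix (Fin 2) (Fin 2) ℝ :=
  !![-(2*μ*σ) + (1/2) * dxI J₀ 0, -((1/2) * dxI J₀ 1);
     (1/2) * dxI J₁ 0, 2*μ*σ - (1/2) * dxI J₁ 1]

/-- `J = (J₀,J₁)` is a `C²` solution of the Riccati-type equation (R):
`½ J'' - μ J' + B(J) J = 0` on `[0,1]`, `J(0) = (2σ,0)ᵀ`, `J(1) = (0,2σ)ᵀ`. -/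
def SolvesR (μ σ : ℝ) (J₀ J₁ : ℝ → ℝ) : Prop :=
  (∀ x ∈ Set.Icc (0:ℝ) 1,
    DifferentiableWithinAt ℝ J₀ (Set.Icc 0 1) x ∧
    DifferentiableWithinAt ℝ (dxI J₀) (Set.Icc 0 1) x ∧
    DifferentiableWithinAt ℝ J₁ (Set.Icc 0 1) x ∧
    DifferentiableWithinAt ℝ (dxI J₁) (Set.Icc 0 1) x) ∧
  ContinuousOn (dxI (dxI J₀)) (Set.Icc 0 1) ∧
  ContinuousOn (dxI (dxI J₁)) (Set.Icc 0 1) ∧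
  (∀ x ∈ Set.Icc (0:ℝ) 1,
    (1/2) * dxI (dxI J₀) x - μ * dxI J₀ x
      + BJ μ σ J₀ J₁ 0 0 * J₀ x + BJ μ σ J₀ J₁ 0 1 * J₁ x = 0 ∧
    (1/2) * dxI (dxI J₁) x - μ * dxI J₁ x
      + BJ μ σ J₀ J₁ 1 0 * J₀ x + BJ μ σ J₀ J₁ 1 1 * J₁ x = 0) ∧
  J₀ 0 = 2*σ ∧ J₁ 0 = 0 ∧ J₀ 1 = 0 ∧ J₁ 1 = 2*σ

/-- `m(J) = max(∫₀¹ |J₀|, ∫₀¹ |J₁|)`. -/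
noncomputable def mJ (J₀ J₁ : ℝ → ℝ) : ℝ :=
  max (∫ x in (0:ℝ)..1, |J₀ x|) (∫ x in (0:ℝ)..1, |J₁ x|)

/-- `μ coth μ`, interpreted as `1` at `μ = 0`. -/
noncomputable def muCoth (μ : ℝ) : ℝ :=
  if μ = 0 then 1 else μ * Real.cosh μ / Real.sinh μ

/-- Condition (1.2): `m(J) ≤ 1` if `σ ≥ μ coth μ` and `m(J) < 1` if `σ < μ coth μ`. -/
def Cond12 (μ σ : ℝ) (J₀ J₁ : ℝ → ℝ) : Prop :=
  (muCoth μ ≤ σ → mJ J₀ J₁ ≤ 1) ∧ (σ < muCoth μ → mJ J₀ J₁ < 1)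

/-- `D^J f = (f(0) - ⟨f,J₀⟩, f(1) - ⟨f,J₁⟩)ᵀ`. -/
noncomputable def DJ (J₀ J₁ : ℝ → ℝ) (f : ℝ → ℝ) : Fin 2 → ℝ :=
  ![f 0 - ∫ x in (0:ℝ)..1, f x * J₀ x, f 1 - ∫ x in (0:ℝ)..1, f x * J₁ x]

section Aux

open intervalIntegral

lemma sliceCont_s7 {g : ℝ → ℝ → ℝ}
    (hg : ContinuousOn (fun p : ℝ × ℝ => g p.1 p.2) (Set.Ioi 0 ×ˢ Set.Icc 0 1))
    {t : ℝ} (ht : 0 < t) : ContinuousOn (g t) (Set.Icc (0:ℝ) 1) := by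
  have hc : ContinuousOn (fun x : ℝ => ((t, x) : ℝ × ℝ)) (Set.Icc (0:ℝ) 1) :=
    (continuous_const.prodMk continuous_id).continuousOn
  exact hg.comp hc (fun x hx => Set.mem_prod.mpr ⟨ht, hx⟩)

lemma hasDerivAt_dxI {g : ℝ → ℝ} {x : ℝ} (hx : x ∈ Set.Ioo (0:ℝ) 1)
    (hg : DifferentiableWithinAt ℝ g (Set.Icc 0 1) x) :
    HasDerivAt g (dxI g x) x := by
  have hmem : Set.Icc (0:ℝ) 1 ∈ nhds x := Icc_mem_nhds hx.1 hx.2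
  have h := hg.differentiableAt hmem
  rw [dxI, derivWithin_of_mem_nhds hmem]
  exact h.hasDerivAt

lemma intCI {g : ℝ → ℝ} (hg : ContinuousOn g (Set.Icc 0 1)) :
    IntervalIntegrable g MeasureTheory.volume 0 1 :=
  hg.intervalIntegrable_of_Icc zero_le_one

lemma ftc {φ φ' : ℝ → ℝ} (hc : ContinuousOn φ (Set.Icc 0 1))
    (hd : ∀ x ∈ Set.Ioo (0:ℝ) 1, HasDerivAt φ (φ' x) x)
    (hi : ContinuousOn φ' (Set.Icc 0 1)) :
    ∫ x in (0:ℝ)..1, φ' x = φ 1 - φ 0 :=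
  intervalIntegral.integral_eq_sub_of_hasDeriv_right_of_le zero_le_one hc
    (fun x hx => (hd x hx).hasDerivWithinAt) (intCI hi)

end Aux

lemma int_pt_eq (μ : ℝ) (u : ℝ → ℝ → ℝ) (hU : MemU u) {t : ℝ} (ht : 0 < t)
    (hpde : ∀ x ∈ Set.Icc (0:ℝ) 1, pt u t x = (1/2) * pxx u t x + μ * px u t x)
    (J : ℝ → ℝ)
    (hJd : ∀ x ∈ Set.Icc (0:ℝ) 1, DifferentiableWithinAt ℝ J (Set.Icc 0 1) x)
    (hJd2 : ∀ x ∈ Set.Icc (0:ℝ) 1, DifferentiableWithinAt ℝ (dxI J) (Set.Icc 0 1) x)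
    (hJc2 : ContinuousOn (dxI (dxI J)) (Set.Icc 0 1)) :
    ∫ x in (0:ℝ)..1, pt u t x * J x
      = (1/2) * (px u t 1 * J 1 - px u t 0 * J 0)
        - (1/2) * (u t 1 * dxI J 1 - u t 0 * dxI J 0)
        + μ * (u t 1 * J 1 - u t 0 * J 0)
        + ∫ x in (0:ℝ)..1, u t x * ((1/2) * dxI (dxI J) x - μ * dxI J x) := by
  have hIccIoo : Set.Ioo (0:ℝ) 1 ⊆ Set.Icc 0 1 := Set.Ioo_subset_Icc_self
  have hu : ContinuousOn (u t) (Set.Icc 0 1) := sliceCont_s7 hU.2.1 ht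
  have hpxc : ContinuousOn (px u t) (Set.Icc 0 1) := sliceCont_s7 hU.2.2.2.1 ht
  have hpxxc : ContinuousOn (pxx u t) (Set.Icc 0 1) := sliceCont_s7 hU.2.2.2.2.1 ht
  have hJc : ContinuousOn J (Set.Icc 0 1) := fun x hx => (hJd x hx).continuousWithinAt
  have hJ'c : ContinuousOn (dxI J) (Set.Icc 0 1) := fun x hx => (hJd2 x hx).continuousWithinAt
  have hJ' : ∀ x ∈ Set.Ioo (0:ℝ) 1, HasDerivAt J (dxI J x) x :=
    fun x hx => hasDerivAt_dxI hx (hJd x (hIccIoo hx))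
  have hJ'' : ∀ x ∈ Set.Ioo (0:ℝ) 1, HasDerivAt (dxI J) (dxI (dxI J) x) x :=
    fun x hx => hasDerivAt_dxI hx (hJd2 x (hIccIoo hx))
  have hux : ∀ x ∈ Set.Ioo (0:ℝ) 1, HasDerivAt (u t) (px u t x) x :=
    fun x hx => hasDerivAt_dxI hx (hU.1 t ht x (hIccIoo hx)).2.1
  have huxx : ∀ x ∈ Set.Ioo (0:ℝ) 1, HasDerivAt (px u t) (pxx u t x) x :=
    fun x hx => hasDerivAt_dxI hx (hU.1 t ht x (hIccIoo hx)).2.2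
  have hiA := intCI (hpxxc.mul hJc)
  have hiB := intCI (hpxc.mul hJ'c)
  have hiC := intCI (hu.mul hJc2)
  have hiD := intCI (hpxc.mul hJc)
  have hiE := intCI (hu.mul hJ'c)
  have I1 : (∫ x in (0:ℝ)..1, (pxx u t x * J x + px u t x * dxI J x))
      = px u t 1 * J 1 - px u t 0 * J 0 :=
    ftc (hpxc.mul hJc) (fun x hx => (huxx x hx).mul (hJ' x hx))
      ((hpxxc.mul hJc).add (hpxc.mul hJ'c))
  have I2 : (∫ x in (0:ℝ)..1, (px u t x * dxI J x + u t x * dxI (dxI J) x))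
      = u t 1 * dxI J 1 - u t 0 * dxI J 0 :=
    ftc (hu.mul hJ'c) (fun x hx => (hux x hx).mul (hJ'' x hx))
      ((hpxc.mul hJ'c).add (hu.mul hJc2))
  have I3 : (∫ x in (0:ℝ)..1, (px u t x * J x + u t x * dxI J x))
      = u t 1 * J 1 - u t 0 * J 0 :=
    ftc (hu.mul hJc) (fun x hx => (hux x hx).mul (hJ' x hx))
      ((hpxc.mul hJc).add (hu.mul hJ'c))
  rw [intervalIntegral.integral_add (f := fun x => pxx u t x * J x) (g := fun x => px u t x * dxI J x) hiA hiB] at I1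
  rw [intervalIntegral.integral_add (f := fun x => px u t x * dxI J x) (g := fun x => u t x * dxI (dxI J) x) hiB hiC] at I2
  rw [intervalIntegral.integral_add (f := fun x => px u t x * J x) (g := fun x => u t x * dxI J x) hiD hiE] at I3
  have L : (∫ x in (0:ℝ)..1, pt u t x * J x)
      = ∫ x in (0:ℝ)..1, ((1/2) * (pxx u t x * J x) + μ * (px u t x * J x)) := by
    apply intervalIntegral.integral_congr
    intro x hx
    rw [Set.uIcc_of_le zero_le_one] at hx
    show pt u t x * J x = _
    rw [hpde x hx]; ring
  have R : (∫ x in (0:ℝ)..1, u t x * ((1/2) * dxI (dxI J) x - μ * dxI J x))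
      = ∫ x in (0:ℝ)..1, ((1/2) * (u t x * dxI (dxI J) x) - μ * (u t x * dxI J x)) := by
    apply intervalIntegral.integral_congr
    intro x _
    ring
  rw [L, R, intervalIntegral.integral_add (f := fun x => (1/2) * (pxx u t x * J x)) (g := fun x => μ * (px u t x * J x)) ((hiA.const_mul ((1:ℝ)/2)) : IntervalIntegrable (fun x => (1/2) * (pxx u t x * J x)) MeasureTheory.volume 0 1) ((hiD.const_mul μ) : IntervalIntegrable (fun x => μ * (px u t x * J x)) MeasureTheory.volume 0 1),
    intervalIntegral.integral_sub (f := fun x => (1/2) * (u t x * dxI (dxI J) x)) (g := fun x => μ * (u t x * dxI J x)) ((hiC.const_mul ((1:ℝ)/2)) : IntervalIntegrable (fun x => (1/2) * (u t x * dxI (dxI J) x)) MeasureTheory.volume 0 1) ((hiE.const_mul μ) : IntervalIntegrable (fun x => μ * (u t x * dxI J x)) MeasureTheory.volume 0 1),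
    intervalIntegral.integral_const_mul, intervalIntegral.integral_const_mul,
    intervalIntegral.integral_const_mul, intervalIntegral.integral_const_mul]
  linear_combination (1/2) * I1 - (1/2) * I2 + μ * I3
/-- component of `D^J u(t,·)` as a function of `t`. -/
noncomputable def vComp (u : ℝ → ℝ → ℝ) (J : ℝ → ℝ) (a : ℝ) (s : ℝ) : ℝ :=
  u s a - ∫ x in (0:ℝ)..1, u s x * J x

lemma hasDerivAt_int (u : ℝ → ℝ → ℝ) (hU : MemU u) (J : ℝ → ℝ)
    (hJc : ContinuousOn J (Set.Icc 0 1)) {t : ℝ} (ht : 0 < t) :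
    HasDerivAt (fun s => ∫ x in (0:ℝ)..1, u s x * J x)
      (∫ x in (0:ℝ)..1, pt u t x * J x) t := by
  obtain ⟨C, hC⟩ := hU.2.2.2.2.2.2 (t/2) (2*t) (by linarith) (by linarith)
  have hball : Metric.ball t (t/2) ⊆ Set.Ioo (t/2) (3*t/2) := by
    rw [Real.ball_eq_Ioo]
    intro s hs
    constructor <;> [linarith [hs.1]; linarith [hs.2]]
  have hballIcc : ∀ s ∈ Metric.ball t (t/2), s ∈ Set.Icc (t/2) (2*t) := by
    intro s hs
    have := hball hs
    exact ⟨this.1.le, by linarith [this.2]⟩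
  have hballpos : ∀ s ∈ Metric.ball t (t/2), (0:ℝ) < s := by
    intro s hs
    have := hball hs
    linarith [this.1]
  have hIoc : Set.uIoc (0:ℝ) 1 = Set.Ioc 0 1 := Set.uIoc_of_le zero_le_one
  have hmeas : ∀ s : ℝ, 0 < s → AEStronglyMeasurable (fun x => u s x * J x)
      (MeasureTheory.volume.restrict (Set.uIoc (0:ℝ) 1)) := by
    intro s hs
    rw [hIoc]
    exact (((sliceCont_s7 hU.2.1 hs).mono Set.Ioc_subset_Icc_self).mul
      (hJc.mono Set.Ioc_subset_Icc_self)).aestronglyMeasurable measurableSet_Ioc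
  have main := intervalIntegral.hasDerivAt_integral_of_dominated_loc_of_deriv_le
    (F := fun s x => u s x * J x) (F' := fun s x => pt u s x * J x) (x₀ := t)
    (bound := fun x => C * |J x|) (Metric.ball_mem_nhds t (half_pos ht))
    (by
      filter_upwards [isOpen_Ioi.mem_nhds (Set.mem_Ioi.mpr ht)] with s hs
      exact hmeas s hs)
    (intCI ((sliceCont_s7 hU.2.1 ht).mul hJc))
    (by
      rw [hIoc]
      exact (((sliceCont_s7 hU.2.2.1 ht).mono Set.Ioc_subset_Icc_self).mul
        (hJc.mono Set.Ioc_subset_Icc_self)).aestronglyMeasurable measurableSet_Ioc)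
    (by
      refine MeasureTheory.ae_of_all _ fun x hx s hs => ?_
      rw [hIoc] at hx
      have hxI : x ∈ Set.Icc (0:ℝ) 1 := Set.Ioc_subset_Icc_self hx
      have hb := (hC s (hballIcc s hs) x hxI).1
      rw [Real.norm_eq_abs, abs_mul]
      exact mul_le_mul_of_nonneg_right hb (abs_nonneg _))
    (intCI (continuousOn_const.mul hJc.abs))
    (by
      refine MeasureTheory.ae_of_all _ fun x hx s hs => ?_
      rw [hIoc] at hx
      have hxI : x ∈ Set.Icc (0:ℝ) 1 := Set.Ioc_subset_Icc_self hx
      exact ((hU.1 s (hballpos s hs) x hxI).1.hasDerivAt).mul_const (J x))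
  exact main.2

lemma tendsto_vComp (u : ℝ → ℝ → ℝ) (f : ℝ → ℝ) (hconv : ConvF u f)
    (J : ℝ → ℝ) (hJc : ContinuousOn J (Set.Icc 0 1)) {a : ℝ} (ha : a ∈ Set.Icc (0:ℝ) 1)
    (hmeas : ∀ s ∈ Set.Ioi (0:ℝ), AEStronglyMeasurable (fun x => u s x * J x)
      (MeasureTheory.volume.restrict (Set.uIoc (0:ℝ) 1))) :
    Filter.Tendsto (vComp u J a) (nhdsWithin 0 (Set.Ioi 0))
      (nhds (f a - ∫ x in (0:ℝ)..1, f x * J x)) := by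
  obtain ⟨C, hC⟩ := hconv.1
  have hIoc : Set.uIoc (0:ℝ) 1 = Set.Ioc 0 1 := Set.uIoc_of_le zero_le_one
  have h1 := hconv.2.1 a ha
  have h2 : Filter.Tendsto (fun s => ∫ x in (0:ℝ)..1, u s x * J x)
      (nhdsWithin 0 (Set.Ioi 0)) (nhds (∫ x in (0:ℝ)..1, f x * J x)) := by
    apply intervalIntegral.tendsto_integral_filter_of_dominated_convergence
      (bound := fun x => C * |J x|)
    · filter_upwards [self_mem_nhdsWithin] with s hs
      exact hmeas s hs
    · filter_upwards [Ioc_mem_nhdsGT zero_lt_one] with s hs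
      refine MeasureTheory.ae_of_all _ fun x hx => ?_
      rw [hIoc] at hx
      have hxI : x ∈ Set.Icc (0:ℝ) 1 := Set.Ioc_subset_Icc_self hx
      rw [Real.norm_eq_abs, abs_mul]
      exact mul_le_mul_of_nonneg_right (hC s hs x hxI) (abs_nonneg _)
    · exact intCI (continuousOn_const.mul hJc.abs)
    · refine MeasureTheory.ae_of_all _ fun x hx => ?_
      rw [hIoc] at hx
      exact (hconv.2.1 x (Set.Ioc_subset_Icc_self hx)).mul_const (J x)
  exact h1.sub h2
lemma pde_icc (μ σ : ℝ) (u : ℝ → ℝ → ℝ) (hU : MemU u) (hEq : SatEq μ σ u)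
    {t : ℝ} (ht : 0 < t) :
    ∀ x ∈ Set.Icc (0:ℝ) 1, pt u t x = (1/2) * pxx u t x + μ * px u t x := by
  have hcont1 : ContinuousOn (pt u t) (Set.Icc 0 1) := sliceCont_s7 hU.2.2.1 ht
  have hcont2 : ContinuousOn (fun x => (1/2) * pxx u t x + μ * px u t x) (Set.Icc 0 1) :=
    (continuousOn_const.mul (sliceCont_s7 hU.2.2.2.2.1 ht)).add
      (continuousOn_const.mul (sliceCont_s7 hU.2.2.2.1 ht))
  exact Set.EqOn.of_subset_closure (fun x hx => hEq.1 t ht x hx) hcont1 hcont2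
    Set.Ioo_subset_Icc_self
    (by rw [closure_Ioo (by norm_num : (0:ℝ) ≠ 1)])

lemma hasDerivAt_row (μ σ : ℝ) (u : ℝ → ℝ → ℝ) (hU : MemU u)
    (J₀ J₁ : ℝ → ℝ) (hJ : SolvesR μ σ J₀ J₁)
    (hEq : SatEq μ σ u) {t : ℝ} (ht : 0 < t) :
    HasDerivAt (vComp u J₀ 0)
      (-(BJ μ σ J₀ J₁ 0 0 * vComp u J₀ 0 t + BJ μ σ J₀ J₁ 0 1 * vComp u J₁ 1 t)) t ∧
    HasDerivAt (vComp u J₁ 1)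
      (-(BJ μ σ J₀ J₁ 1 0 * vComp u J₀ 0 t + BJ μ σ J₀ J₁ 1 1 * vComp u J₁ 1 t)) t := by
  obtain ⟨hJdiff, hJ0c2, hJ1c2, hReq, hJ00, hJ10, hJ01, hJ11⟩ := hJ
  have ht' : t ∈ Set.Ioi (0:ℝ) := ht
  have hu : ContinuousOn (u t) (Set.Icc 0 1) := sliceCont_s7 hU.2.1 ht
  have hJ0c : ContinuousOn J₀ (Set.Icc 0 1) := fun x hx => (hJdiff x hx).1.continuousWithinAt
  have hJ1c : ContinuousOn J₁ (Set.Icc 0 1) := fun x hx => (hJdiff x hx).2.2.1.continuousWithinAt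
  have hpde := pde_icc μ σ u hU hEq ht
  have hInt0 := int_pt_eq μ u hU ht hpde J₀ (fun x hx => (hJdiff x hx).1)
    (fun x hx => (hJdiff x hx).2.1) hJ0c2
  have hInt1 := int_pt_eq μ u hU ht hpde J₁ (fun x hx => (hJdiff x hx).2.2.1)
    (fun x hx => (hJdiff x hx).2.2.2) hJ1c2
  have hB00 : BJ μ σ J₀ J₁ 0 0 = -(2*μ*σ) + (1/2) * dxI J₀ 0 := by simp [BJ]
  have hB01 : BJ μ σ J₀ J₁ 0 1 = -((1/2) * dxI J₀ 1) := by simp [BJ]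
  have hB10 : BJ μ σ J₀ J₁ 1 0 = (1/2) * dxI J₁ 0 := by simp [BJ]
  have hB11 : BJ μ σ J₀ J₁ 1 1 = 2*μ*σ - (1/2) * dxI J₁ 1 := by simp [BJ]
  -- rewrite the (R)-term integrals
  have hiX := intCI (hu.mul hJ0c)
  have hiY := intCI (hu.mul hJ1c)
  have e0 : (∫ x in (0:ℝ)..1, u t x * ((1/2) * dxI (dxI J₀) x - μ * dxI J₀ x))
      = -(BJ μ σ J₀ J₁ 0 0 * ∫ x in (0:ℝ)..1, u t x * J₀ x)
        - BJ μ σ J₀ J₁ 0 1 * ∫ x in (0:ℝ)..1, u t x * J₁ x := by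
    have hcongr : (∫ x in (0:ℝ)..1, u t x * ((1/2) * dxI (dxI J₀) x - μ * dxI J₀ x))
        = ∫ x in (0:ℝ)..1, (-(BJ μ σ J₀ J₁ 0 0 * (u t x * J₀ x))
            - BJ μ σ J₀ J₁ 0 1 * (u t x * J₁ x)) := by
      apply intervalIntegral.integral_congr
      intro x hx
      rw [Set.uIcc_of_le zero_le_one] at hx
      have h := (hReq x hx).1
      show u t x * ((1/2) * dxI (dxI J₀) x - μ * dxI J₀ x) = _
      linear_combination u t x * h
    rw [hcongr, intervalIntegral.integral_sub
      (intCI ((continuousOn_const.mul (hu.mul hJ0c)).neg) :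
        IntervalIntegrable (fun x => -(BJ μ σ J₀ J₁ 0 0 * (u t x * J₀ x))) MeasureTheory.volume 0 1)
      (intCI (continuousOn_const.mul (hu.mul hJ1c)) :
        IntervalIntegrable (fun x => BJ μ σ J₀ J₁ 0 1 * (u t x * J₁ x)) MeasureTheory.volume 0 1),
      intervalIntegral.integral_neg, intervalIntegral.integral_const_mul,
      intervalIntegral.integral_const_mul]
  have e1 : (∫ x in (0:ℝ)..1, u t x * ((1/2) * dxI (dxI J₁) x - μ * dxI J₁ x))
      = -(BJ μ σ J₀ J₁ 1 0 * ∫ x in (0:ℝ)..1, u t x * J₀ x)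
        - BJ μ σ J₀ J₁ 1 1 * ∫ x in (0:ℝ)..1, u t x * J₁ x := by
    have hcongr : (∫ x in (0:ℝ)..1, u t x * ((1/2) * dxI (dxI J₁) x - μ * dxI J₁ x))
        = ∫ x in (0:ℝ)..1, (-(BJ μ σ J₀ J₁ 1 0 * (u t x * J₀ x))
            - BJ μ σ J₀ J₁ 1 1 * (u t x * J₁ x)) := by
      apply intervalIntegral.integral_congr
      intro x hx
      rw [Set.uIcc_of_le zero_le_one] at hx
      have h := (hReq x hx).2
      show u t x * ((1/2) * dxI (dxI J₁) x - μ * dxI J₁ x) = _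
      linear_combination u t x * h
    rw [hcongr, intervalIntegral.integral_sub
      (intCI ((continuousOn_const.mul (hu.mul hJ0c)).neg) :
        IntervalIntegrable (fun x => -(BJ μ σ J₀ J₁ 1 0 * (u t x * J₀ x))) MeasureTheory.volume 0 1)
      (intCI (continuousOn_const.mul (hu.mul hJ1c)) :
        IntervalIntegrable (fun x => BJ μ σ J₀ J₁ 1 1 * (u t x * J₁ x)) MeasureTheory.volume 0 1),
      intervalIntegral.integral_neg, intervalIntegral.integral_const_mul,
      intervalIntegral.integral_const_mul]
  -- raw derivatives
  have hd0 : HasDerivAt (vComp u J₀ 0)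
      (pt u t 0 - ∫ x in (0:ℝ)..1, pt u t x * J₀ x) t :=
    ((hU.1 t ht' 0 (Set.left_mem_Icc.mpr zero_le_one)).1.hasDerivAt).sub
      (hasDerivAt_int u hU J₀ hJ0c ht)
  have hd1 : HasDerivAt (vComp u J₁ 1)
      (pt u t 1 - ∫ x in (0:ℝ)..1, pt u t x * J₁ x) t :=
    ((hU.1 t ht' 1 (Set.right_mem_Icc.mpr zero_le_one)).1.hasDerivAt).sub
      (hasDerivAt_int u hU J₁ hJ1c ht)
  constructor
  · have key : pt u t 0 - (∫ x in (0:ℝ)..1, pt u t x * J₀ x)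
        = -(BJ μ σ J₀ J₁ 0 0 * vComp u J₀ 0 t + BJ μ σ J₀ J₁ 0 1 * vComp u J₁ 1 t) := by
      rw [(hEq.2 t ht').1, hInt0, e0, hJ00, hJ01, hB00, hB01]
      unfold vComp
      ring
    rw [← key]; exact hd0
  · have key : pt u t 1 - (∫ x in (0:ℝ)..1, pt u t x * J₁ x)
        = -(BJ μ σ J₀ J₁ 1 0 * vComp u J₀ 0 t + BJ μ σ J₀ J₁ 1 1 * vComp u J₁ 1 t) := by
      rw [(hEq.2 t ht').2, hInt1, e1, hJ10, hJ11, hB10, hB11]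
      unfold vComp
      ring
    rw [← key]; exact hd1
lemma exp_entry_hasDerivAt (B : Matrix (Fin 2) (Fin 2) ℝ) (t : ℝ) (i j : Fin 2) :
    HasDerivAt (fun s : ℝ => NormedSpace.exp (s • B) i j)
      ((NormedSpace.exp (t • B) * B) i j) t := by
  letI : SeminormedRing (Matrix (Fin 2) (Fin 2) ℝ) := Matrix.linftyOpSemiNormedRing
  letI : NormedRing (Matrix (Fin 2) (Fin 2) ℝ) := Matrix.linftyOpNormedRing
  letI : NormedAlgebra ℝ (Matrix (Fin 2) (Fin 2) ℝ) := Matrix.linftyOpNormedAlgebra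
  have h : HasDerivAt (fun s : ℝ => NormedSpace.exp (s • B))
      (NormedSpace.exp (t • B) * B) t := hasDerivAt_exp_smul_const B t
  let ℓ := LinearMap.toContinuousLinearMap (Matrix.entryLinearMap ℝ ℝ i j)
  have h2 := ℓ.hasFDerivAt.comp_hasDerivAt t h
  exact h2
lemma w_const (Bm : Matrix (Fin 2) (Fin 2) ℝ) (g0 g1 : ℝ → ℝ) (c0 c1 : ℝ)
    (hd : ∀ t ∈ Set.Ioi (0:ℝ),
      HasDerivAt g0 (-(Bm 0 0 * g0 t + Bm 0 1 * g1 t)) t ∧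
      HasDerivAt g1 (-(Bm 1 0 * g0 t + Bm 1 1 * g1 t)) t)
    (hl0 : Filter.Tendsto g0 (nhdsWithin 0 (Set.Ioi 0)) (nhds c0))
    (hl1 : Filter.Tendsto g1 (nhdsWithin 0 (Set.Ioi 0)) (nhds c1))
    (i : Fin 2) {t : ℝ} (ht : 0 < t) :
    NormedSpace.exp (t • Bm) i 0 * g0 t + NormedSpace.exp (t • Bm) i 1 * g1 t
      = (1 : Matrix (Fin 2) (Fin 2) ℝ) i 0 * c0 + (1 : Matrix (Fin 2) (Fin 2) ℝ) i 1 * c1 := by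
  set w : ℝ → ℝ := fun s => NormedSpace.exp (s • Bm) i 0 * g0 s
      + NormedSpace.exp (s • Bm) i 1 * g1 s with hwdef
  have hw' : ∀ s ∈ Set.Ioi (0:ℝ), HasDerivAt w 0 s := by
    intro s hs
    have h0 := (exp_entry_hasDerivAt Bm s i 0).mul (hd s hs).1
    have h1 := (exp_entry_hasDerivAt Bm s i 1).mul (hd s hs).2
    have h2 := h0.add h1
    refine h2.congr_deriv ?_
    simp only [Matrix.mul_apply, Fin.sum_univ_two]
    ring
  have hconst : ∀ s ∈ Set.Ioi (0:ℝ), ∀ r ∈ Set.Ioi (0:ℝ), w s = w r := by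
    intro s hs r hr
    have hle := Convex.norm_image_sub_le_of_norm_hasDerivWithin_le
      (f := w) (f' := fun _ => (0:ℝ)) (C := 0)
      (fun x hx => (hw' x hx).hasDerivWithinAt) (fun x _ => by simp) (convex_Ioi 0) hs hr
    have h3 : ‖w r - w s‖ ≤ 0 := by simpa using hle
    exact (sub_eq_zero.mp (norm_le_zero_iff.mp h3)).symm
  have hE : ∀ j : Fin 2, Filter.Tendsto (fun s : ℝ => NormedSpace.exp (s • Bm) i j)
      (nhdsWithin 0 (Set.Ioi 0)) (nhds ((1 : Matrix (Fin 2) (Fin 2) ℝ) i j)) := by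
    intro j
    have h := (exp_entry_hasDerivAt Bm 0 i j).continuousAt
    have h0 : NormedSpace.exp ((0:ℝ) • Bm) = 1 := by
      rw [zero_smul]; exact NormedSpace.exp_zero
    have h1 : Filter.Tendsto (fun s : ℝ => NormedSpace.exp (s • Bm) i j)
        (nhdsWithin 0 (Set.Ioi 0)) (nhds (NormedSpace.exp ((0:ℝ) • Bm) i j)) :=
      h.continuousWithinAt
    rw [h0] at h1
    exact h1
  have hlimw : Filter.Tendsto w (nhdsWithin 0 (Set.Ioi 0))
      (nhds ((1 : Matrix (Fin 2) (Fin 2) ℝ) i 0 * c0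
        + (1 : Matrix (Fin 2) (Fin 2) ℝ) i 1 * c1)) :=
    ((hE 0).mul hl0).add ((hE 1).mul hl1)
  have h2 : Filter.Tendsto w (nhdsWithin 0 (Set.Ioi 0)) (nhds (w t)) := by
    apply Filter.Tendsto.congr' _ tendsto_const_nhds
    filter_upwards [self_mem_nhdsWithin] with s hs
    exact hconst t ht s hs
  exact tendsto_nhds_unique h2 hlimw
/-- Theorem 2.1, evolution of `D^J`: for any `C²` solution `J` of (R) and any
solution `u` of (1.1) with initial data `f ∈ F`, `D^J u(t,·) = e^{-tB(J)} D^J f`; in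
particular `D^J f = 0` implies `D^J u(t,·) = 0` for all `t > 0`. -/
theorem stmt7 (μ σ : ℝ) (hσ : 0 < σ) (J₀ J₁ : ℝ → ℝ)
    (hJ : SolvesR μ σ J₀ J₁)
    (f : ℝ → ℝ) (hf : MemF f) (u : ℝ → ℝ → ℝ)
    (hU : MemU u) (hEq : SatEq μ σ u) (hconv : ConvF u f) :
    (∀ t ∈ Set.Ioi (0:ℝ),
      DJ J₀ J₁ (fun x => u t x) =
        (NormedSpace.exp ((-t) • BJ μ σ J₀ J₁)).mulVec (DJ J₀ J₁ f)) ∧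
    (DJ J₀ J₁ f = 0 → ∀ t ∈ Set.Ioi (0:ℝ), DJ J₀ J₁ (fun x => u t x) = 0) := by
  classical
  have hJ0c : ContinuousOn J₀ (Set.Icc 0 1) := fun x hx => (hJ.1 x hx).1.continuousWithinAt
  have hJ1c : ContinuousOn J₁ (Set.Icc 0 1) := fun x hx => (hJ.1 x hx).2.2.1.continuousWithinAt
  have hmeas0 : ∀ s ∈ Set.Ioi (0:ℝ), AEStronglyMeasurable (fun x => u s x * J₀ x)
      (MeasureTheory.volume.restrict (Set.uIoc (0:ℝ) 1)) := by
    intro s hs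
    rw [Set.uIoc_of_le zero_le_one]
    exact (((sliceCont_s7 hU.2.1 hs).mono Set.Ioc_subset_Icc_self).mul
      (hJ0c.mono Set.Ioc_subset_Icc_self)).aestronglyMeasurable measurableSet_Ioc
  have hmeas1 : ∀ s ∈ Set.Ioi (0:ℝ), AEStronglyMeasurable (fun x => u s x * J₁ x)
      (MeasureTheory.volume.restrict (Set.uIoc (0:ℝ) 1)) := by
    intro s hs
    rw [Set.uIoc_of_le zero_le_one]
    exact (((sliceCont_s7 hU.2.1 hs).mono Set.Ioc_subset_Icc_self).mul
      (hJ1c.mono Set.Ioc_subset_Icc_self)).aestronglyMeasurable measurableSet_Ioc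
  have hlim0 := tendsto_vComp u f hconv J₀ hJ0c (Set.left_mem_Icc.mpr zero_le_one) hmeas0
  have hlim1 := tendsto_vComp u f hconv J₁ hJ1c (Set.right_mem_Icc.mpr zero_le_one) hmeas1
  have hw := w_const (BJ μ σ J₀ J₁) (vComp u J₀ 0) (vComp u J₁ 1)
    (f 0 - ∫ x in (0:ℝ)..1, f x * J₀ x) (f 1 - ∫ x in (0:ℝ)..1, f x * J₁ x)
    (fun t ht => hasDerivAt_row μ σ u hU J₀ J₁ hJ hEq ht) hlim0 hlim1
  have main : ∀ t ∈ Set.Ioi (0:ℝ),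
      (NormedSpace.exp (t • BJ μ σ J₀ J₁)).mulVec (DJ J₀ J₁ (fun x => u t x))
        = DJ J₀ J₁ f := by
    intro t ht
    funext i
    have h := hw i ht
    fin_cases i <;>
      simpa [Matrix.mulVec, dotProduct, Fin.sum_univ_two, DJ, vComp,
        Matrix.one_apply] using h
  have hfirst : ∀ t ∈ Set.Ioi (0:ℝ),
      DJ J₀ J₁ (fun x => u t x)
        = (NormedSpace.exp ((-t) • BJ μ σ J₀ J₁)).mulVec (DJ J₀ J₁ f) := by
    intro t ht
    have hcomm : Commute ((-t) • BJ μ σ J₀ J₁) (t • BJ μ σ J₀ J₁) :=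
      ((Commute.refl (BJ μ σ J₀ J₁)).smul_left _).smul_right _
    have hmul : NormedSpace.exp ((-t) • BJ μ σ J₀ J₁)
        * NormedSpace.exp (t • BJ μ σ J₀ J₁) = 1 := by
      rw [← Matrix.exp_add_of_commute _ _ hcomm]
      have hz : (-t) • BJ μ σ J₀ J₁ + t • BJ μ σ J₀ J₁ = 0 := by
        rw [← add_smul]; simp
      rw [hz]
      exact NormedSpace.exp_zero
    rw [← main t ht, Matrix.mulVec_mulVec, hmul, Matrix.one_mulVec]
  exact ⟨hfirst, fun h0 t ht => by rw [hfirst t ht, h0, Matrix.mulVec_zero]⟩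
end
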